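/- Let f: D → ℝⁿ be a continuous mapping such that f⁻¹(y) contains no nondegenerate curve for any y ∈ ℝⁿ. Let β: I₀ → ℝⁿ be a closed rectifiable curve with length function l_β: I₀ → [0, l(β)], and let α: I → D, I ⊂ I₀, be a curve with f∘α a subpath of β. Then there exists a unique function α*: l_β(I) → D such that α = α* ∘ (l_β|_I). -/

import Mathlib

open MeasureTheory ENNReal Set

noncomputable section
open scoped Classical

/-- A closed curve in `ℝⁿ`: a continuous map defined on a compact interval `[a, b]`. -/
structure Curve (n : ℕ) where
  a : ℝ
  b : ℝ
  hab : a ≤ b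
  toFun : ℝ → EuclideanSpace ℝ (Fin n)
  cont : ContinuousOn toFun (Set.Icc a b)

namespace Curve

variable {n : ℕ}

/-- The length of a curve, as an extended nonnegative real. -/
def eLength (γ : Curve n) : ℝ≥0∞ := eVariationOn γ.toFun (Set.Icc γ.a γ.b)

/-- A curve is rectifiable if it has finite length. -/
def Rectifiable (γ : Curve n) : Prop := γ.eLength ≠ ⊤

/-- The (real-valued) length of a curve. -/
def length (γ : Curve n) : ℝ := γ.eLength.toReal

/-- The length function `l_γ(t)`: the length of `γ|_[a,t]`. -/
def lengthFun (γ : Curve n) (t : ℝ) : ℝ := (eVariationOn γ.toFun (Set.Icc γ.a t)).toReal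

/-- The normal representation `γ⁰ : [0, l(γ)] → ℝⁿ` of a (rectifiable) curve,
the arclength reparametrization satisfying `γ = γ⁰ ∘ l_γ`. -/
def normalRep (γ : Curve n) (s : ℝ) : EuclideanSpace ℝ (Fin n) :=
  γ.toFun (sInf {t | t ∈ Set.Icc γ.a γ.b ∧ γ.lengthFun t = s})

/-- A curve lies in a set `D`. -/
def InSet (γ : Curve n) (D : Set (EuclideanSpace ℝ (Fin n))) : Prop :=
  ∀ t ∈ Set.Icc γ.a γ.b, γ.toFun t ∈ D

end Curve

variable {n : ℕ}

/-- The line integral `∫_γ ρ |dx|` of a nonnegative Borel function over a curve,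
computed through the normal representation. -/
def lineIntegral (ρ : EuclideanSpace ℝ (Fin n) → ℝ≥0∞) (γ : Curve n) : ℝ≥0∞ :=
  ∫⁻ t in Set.Icc (0 : ℝ) γ.length, ρ (γ.normalRep t)

/-- `ρ` is admissible for the curve family `Γ`: it is Borel and
`∫_γ ρ |dx| ≥ 1` for every (locally) rectifiable curve of the family. -/
def Admissible (ρ : EuclideanSpace ℝ (Fin n) → ℝ≥0∞) (Γ : Set (Curve n)) : Prop :=
  Measurable ρ ∧ ∀ γ ∈ Γ, γ.Rectifiable → 1 ≤ lineIntegral ρ γ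

/-- The `p`-modulus `M_p(Γ)` of a family of curves. -/
def modulus (p : ℝ) (Γ : Set (Curve n)) : ℝ≥0∞ :=
  ⨅ (ρ : EuclideanSpace ℝ (Fin n) → ℝ≥0∞) (_ : Admissible ρ Γ), ∫⁻ x, ρ x ^ p

/-- The image family `f(Γ)`: curves obtained by composing curves of `Γ` with `f`. -/
def pushforward (f : EuclideanSpace ℝ (Fin n) → EuclideanSpace ℝ (Fin n))
    (Γ : Set (Curve n)) : Set (Curve n) :=
  {β | ∃ γ ∈ Γ, β.a = γ.a ∧ β.b = γ.b ∧ ∀ t ∈ Set.Icc γ.a γ.b, β.toFun t = f (γ.toFun t)}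

/-- `l(A) = inf_{|h| = 1} |A h|`. -/
def minNorm (A : EuclideanSpace ℝ (Fin n) →L[ℝ] EuclideanSpace ℝ (Fin n)) : ℝ :=
  sInf ((fun h => ‖A h‖) '' {h | ‖h‖ = 1})

/-- The inner dilatation of order `p` of a linear map `A`:
`|det A| / l(A)^p` if `det A ≠ 0`, `1` if `A = 0`, and `∞` otherwise. -/
def innerDilatation (p : ℝ)
    (A : EuclideanSpace ℝ (Fin n) →L[ℝ] EuclideanSpace ℝ (Fin n)) : ℝ≥0∞ :=
  if A.det ≠ 0 then ENNReal.ofReal (|A.det| / minNorm A ^ p)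
  else if A = 0 then 1 else ⊤

/-- `K_{I,p}(x, f)`, the inner dilatation of order `p` of `f` at `x`. -/
def KIp (p : ℝ) (f : EuclideanSpace ℝ (Fin n) → EuclideanSpace ℝ (Fin n))
    (x : EuclideanSpace ℝ (Fin n)) : ℝ≥0∞ :=
  innerDilatation p (fderiv ℝ f x)

/-- Luzin's `N`-property on `D`. -/
def NProp (f : EuclideanSpace ℝ (Fin n) → EuclideanSpace ℝ (Fin n))
    (D : Set (EuclideanSpace ℝ (Fin n))) : Prop :=
  ∀ S ⊆ D, volume S = 0 → volume (f '' S) = 0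

/-- The `N⁻¹`-property on `D`. -/
def NInvProp (f : EuclideanSpace ℝ (Fin n) → EuclideanSpace ℝ (Fin n))
    (D : Set (EuclideanSpace ℝ (Fin n))) : Prop :=
  ∀ S : Set (EuclideanSpace ℝ (Fin n)), volume S = 0 → volume (D ∩ f ⁻¹' S) = 0

/-- `f` is discrete on `D`: each fiber consists of isolated points. -/
def DiscreteMap (f : EuclideanSpace ℝ (Fin n) → EuclideanSpace ℝ (Fin n))
    (D : Set (EuclideanSpace ℝ (Fin n))) : Prop :=
  ∀ y, ∀ x ∈ D, f x = y → ∃ ε > 0, ∀ z ∈ Metric.ball x ε ∩ D, f z = y → z = x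

/-- Absolute continuity of `g` on `[a, b]`. -/
def AbsContOn (g : ℝ → EuclideanSpace ℝ (Fin n)) (a b : ℝ) : Prop :=
  ∀ ε > 0, ∃ δ > 0, ∀ (k : ℕ) (u v : ℕ → ℝ),
    (∀ i < k, a ≤ u i ∧ u i ≤ v i ∧ v i ≤ b) →
    (∀ i < k, ∀ j < k, i ≠ j → Disjoint (Set.Ioo (u i) (v i)) (Set.Ioo (u j) (v j))) →
    (∑ i ∈ Finset.range k, (v i - u i)) < δ →
    (∑ i ∈ Finset.range k, ‖g (v i) - g (u i)‖) < ε

/-- The `ACP_p⁻¹` property: for `p`-a.e. closed curve `β` in `f(D)`, every lifting `γ` of `β`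
in `D` is rectifiable and its `f`-representation is absolutely continuous. -/
def ACPinv (p : ℝ) (f : EuclideanSpace ℝ (Fin n) → EuclideanSpace ℝ (Fin n))
    (D : Set (EuclideanSpace ℝ (Fin n))) : Prop :=
  modulus p {β : Curve n | β.InSet (f '' D) ∧
    ¬ ∀ γ : Curve n, γ.a = β.a → γ.b = β.b → γ.InSet D →
        (∀ t ∈ Set.Icc γ.a γ.b, f (γ.toFun t) = β.toFun t) →
        γ.Rectifiable ∧ ∃ αs : ℝ → EuclideanSpace ℝ (Fin n),
          (∀ t ∈ Set.Icc γ.a γ.b, γ.toFun t = αs (β.lengthFun t)) ∧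
          AbsContOn αs 0 β.length} = 0

/-- `f` winds the closed curve `α` `m` times around itself. -/
def Winds (f : EuclideanSpace ℝ (Fin n) → EuclideanSpace ℝ (Fin n)) (m : ℕ)
    (α : Curve n) : Prop :=
  ∃ β : Curve n, β.a = α.a ∧ β.b = α.b ∧
    (∀ t ∈ Set.Icc α.a α.b, β.toFun t = f (α.toFun t)) ∧ β.Rectifiable ∧
    ∃ αs : ℝ → EuclideanSpace ℝ (Fin n),
      (∀ t ∈ Set.Icc α.a α.b, α.toFun t = αs (β.lengthFun t)) ∧
      ∀ (t : ℝ) (j : ℕ), 0 ≤ t → 1 ≤ j → j ≤ m - 1 →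
        t + j * (β.length / m) < β.length →
        β.normalRep (t + j * (β.length / m)) = β.normalRep t ∧
        αs (t + j * (β.length / m)) ≠ αs t

/-- `f` is bi-Lipschitz on the set `S`. -/
def BiLipschitzOn (f : EuclideanSpace ℝ (Fin n) → EuclideanSpace ℝ (Fin n))
    (S : Set (EuclideanSpace ℝ (Fin n))) : Prop :=
  ∃ M M' : ℝ, 0 < M' ∧
    (∀ x ∈ S, ∀ y ∈ S, dist (f x) (f y) ≤ M * dist x y) ∧
    (∀ x ∈ S, ∀ y ∈ S, M' * dist x y ≤ dist (f x) (f y))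

/-- Encoding of `f ∈ W^{1,n}_loc(D)`: `f` is differentiable a.e. in `D` and its derivative is
locally `n`-integrable on `D` (Mathlib does not yet have Sobolev spaces). -/
def MemW1nLoc (n' : ℕ) (f : EuclideanSpace ℝ (Fin n) → EuclideanSpace ℝ (Fin n))
    (D : Set (EuclideanSpace ℝ (Fin n))) : Prop :=
  (∀ᵐ x ∂(volume.restrict D), DifferentiableAt ℝ f x) ∧
  LocallyIntegrableOn (fun x => ‖fderiv ℝ f x‖ ^ n') D volume

/-- `f` is a mapping with bounded distortion (constant `K`) on the domain `D`. -/
def BoundedDistortion (K : ℝ) (f : EuclideanSpace ℝ (Fin n) → EuclideanSpace ℝ (Fin n))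
    (D : Set (EuclideanSpace ℝ (Fin n))) : Prop :=
  ContinuousOn f D ∧ MemW1nLoc n f D ∧
  ((∀ᵐ x ∂(volume.restrict D), 0 ≤ (fderiv ℝ f x).det) ∨
   (∀ᵐ x ∂(volume.restrict D), (fderiv ℝ f x).det ≤ 0)) ∧
  (∀ᵐ x ∂(volume.restrict D), ‖fderiv ℝ f x‖ ^ n ≤ K * |(fderiv ℝ f x).det|)

end

/-- **Existence and uniqueness of the `f`-representation.** Let `f : D → ℝⁿ` be continuous and
such that `f⁻¹(y)` contains no nondegenerate curve for any `y`. Let `β` be a closed rectifiable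
curve with length function `l_β`, and let `α : I → D` (`I` a subinterval of the domain of `β`)
be a curve with `f ∘ α` a subpath of `β` (i.e. `f(α(t)) = β(t)` on `I`). Then there is a unique
function `α* : l_β(I) → D` with `α = α* ∘ (l_β|_I)`. -/
theorem exists_unique_f_representation
    {n : ℕ} (D : Set (EuclideanSpace ℝ (Fin n)))
    (f : EuclideanSpace ℝ (Fin n) → EuclideanSpace ℝ (Fin n))
    (hf : ContinuousOn f D)
    (hfib : ∀ y : EuclideanSpace ℝ (Fin n), ∀ γ : Curve n, γ.InSet D →
      (∀ t ∈ Set.Icc γ.a γ.b, f (γ.toFun t) = y) →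
      Set.Subsingleton (γ.toFun '' Set.Icc γ.a γ.b))
    (β : Curve n) (hβ : β.Rectifiable)
    (I : Set ℝ) (hI : I ⊆ Set.Icc β.a β.b) (hIint : I.OrdConnected)
    (α : ℝ → EuclideanSpace ℝ (Fin n)) (hα : ContinuousOn α I)
    (hαD : ∀ t ∈ I, α t ∈ D)
    (hsub : ∀ t ∈ I, f (α t) = β.toFun t) :
    ∃ αs : ℝ → EuclideanSpace ℝ (Fin n),
      (∀ t ∈ I, α t = αs (β.lengthFun t)) ∧
      (∀ s ∈ β.lengthFun '' I, αs s ∈ D) ∧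
      ∀ g : ℝ → EuclideanSpace ℝ (Fin n),
        (∀ t ∈ I, α t = g (β.lengthFun t)) → Set.EqOn g αs (β.lengthFun '' I) := by
  -- Key: equal length values force equal α values
  have key' : ∀ t₁ ∈ I, ∀ t₂ ∈ I, t₁ ≤ t₂ → β.lengthFun t₁ = β.lengthFun t₂ →
      α t₁ = α t₂ := by
    intro t₁ ht₁ t₂ ht₂ h12 heq
    have ht₁b := hI ht₁
    have ht₂b := hI ht₂
    have h1 : eVariationOn β.toFun (Set.Icc β.a t₁) ≠ ⊤ :=
      ne_top_of_le_ne_top hβ (eVariationOn.mono β.toFun (Set.Icc_subset_Icc_right ht₁b.2))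
    have h2 : eVariationOn β.toFun (Set.Icc β.a t₂) ≠ ⊤ :=
      ne_top_of_le_ne_top hβ (eVariationOn.mono β.toFun (Set.Icc_subset_Icc_right ht₂b.2))
    have heq' : eVariationOn β.toFun (Set.Icc β.a t₁) = eVariationOn β.toFun (Set.Icc β.a t₂) :=
      (ENNReal.toReal_eq_toReal_iff' h1 h2).mp heq
    have hsum : eVariationOn β.toFun (Set.Icc β.a t₁) + eVariationOn β.toFun (Set.Icc t₁ t₂)
        = eVariationOn β.toFun (Set.Icc β.a t₂) := by
      have := eVariationOn.Icc_add_Icc β.toFun (s := Set.univ) ht₁b.1 h12 (Set.mem_univ t₁)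
      simpa [Set.univ_inter] using this
    have hz : eVariationOn β.toFun (Set.Icc t₁ t₂) = 0 := by
      have : eVariationOn β.toFun (Set.Icc β.a t₁) + eVariationOn β.toFun (Set.Icc t₁ t₂)
          = eVariationOn β.toFun (Set.Icc β.a t₁) + 0 := by
        rw [add_zero, hsum, heq']
      exact (ENNReal.add_right_inj h1).mp this
    have hconst : ∀ t ∈ Set.Icc t₁ t₂, β.toFun t = β.toFun t₁ := by
      intro t ht
      have := (eVariationOn.eq_zero_iff β.toFun).mp hz t ht t₁ ⟨le_refl t₁, h12⟩
      exact edist_eq_zero.mp (le_antisymm (le_of_eq this) zero_le)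
    have hIcc : Set.Icc t₁ t₂ ⊆ I := hIint.out ht₁ ht₂
    set γ : Curve n := ⟨t₁, t₂, h12, α, hα.mono hIcc⟩ with hγ
    have hsing : Set.Subsingleton (γ.toFun '' Set.Icc γ.a γ.b) := by
      apply hfib (β.toFun t₁) γ
      · intro t ht
        exact hαD t (hIcc ht)
      · intro t ht
        rw [show γ.toFun t = α t from rfl, hsub t (hIcc ht), hconst t ht]
    exact hsing ⟨t₁, ⟨le_refl t₁, h12⟩, rfl⟩ ⟨t₂, ⟨h12, le_refl t₂⟩, rfl⟩
  have key : ∀ t₁ ∈ I, ∀ t₂ ∈ I, β.lengthFun t₁ = β.lengthFun t₂ → α t₁ = α t₂ := by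
    intro t₁ ht₁ t₂ ht₂ heq
    rcases le_total t₁ t₂ with h | h
    · exact key' t₁ ht₁ t₂ ht₂ h heq
    · exact (key' t₂ ht₂ t₁ ht₁ h heq.symm).symm
  classical
  refine ⟨fun s => if h : ∃ t ∈ I, β.lengthFun t = s then α h.choose else 0, ?_, ?_, ?_⟩
  · intro t ht
    have h : ∃ t' ∈ I, β.lengthFun t' = β.lengthFun t := ⟨t, ht, rfl⟩
    simp only [dif_pos h]
    exact key t ht h.choose h.choose_spec.1 h.choose_spec.2.symm
  · rintro s ⟨t, ht, rfl⟩
    have h : ∃ t' ∈ I, β.lengthFun t' = β.lengthFun t := ⟨t, ht, rfl⟩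
    simp only [dif_pos h]
    exact hαD _ h.choose_spec.1
  · intro g hg
    rintro s ⟨t, ht, rfl⟩
    have h : ∃ t' ∈ I, β.lengthFun t' = β.lengthFun t := ⟨t, ht, rfl⟩
    simp only [dif_pos h]
    rw [← hg t ht]
    exact key t ht h.choose h.choose_spec.1 h.choose_spec.2.symm
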